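/- Let (S,+) be a commutative semigroup, let T ⊆ S be a thick subset, and let A be a finite nonempty subset of S. Then the set B = {(a,n) ∈ S × ℕ : a + n·A ⊆ T} is thick in the commutative semigroup S × ℕ. -/
import Mathlib


/-- `A` is thick in an additive commutative semigroup. -/
def Thick {T : Type*} [AddCommSemigroup T] (A : Set T) : Prop :=
  ∀ E : Finset T, E.Nonempty → ∃ z : T, ∀ e ∈ E, e + z ∈ A

/-- `pnsmul n x` is the sum of `x` with itself `n` times, for a positive integer `n`. -/
def pnsmul {S : Type*} [AddSemigroup S] (n : ℕ+) (x : S) : S :=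
  Nat.rec (motive := fun _ => S) x (fun _ y => y + x) n.natPred

/-- If `T ⊆ S` is thick and `A ⊆ S` is finite nonempty, then
`B = {(a, n) ∈ S × ℕ⁺ : a + n·A ⊆ T}` is thick in `S × ℕ⁺`. -/
theorem stmt15 {S : Type*} [AddCommSemigroup S] (T : Set S) (hT : Thick T)
    (A : Finset S) (hA : A.Nonempty) :
    Thick {p : S × ℕ+ | ∀ x ∈ A, p.1 + pnsmul p.2 x ∈ T} := by
  intro E hE
  classical
  obtain ⟨z, hz⟩ := hT ((E ×ˢ A).image
    (fun q => q.1.1 + pnsmul (q.1.2 + 1) q.2))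
    (by
      obtain ⟨e, he⟩ := hE
      obtain ⟨x, hx⟩ := hA
      exact ⟨_, Finset.mem_image.2 ⟨(e, x), Finset.mem_product.2 ⟨he, hx⟩, rfl⟩⟩)
  refine ⟨(z, 1), fun e he => ?_⟩
  intro x hx
  have := hz (e.1 + pnsmul (e.2 + 1) x)
    (Finset.mem_image.2 ⟨(e, x), Finset.mem_product.2 ⟨he, hx⟩, rfl⟩)
  simpa [add_right_comm] using this
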